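/- For the multilayer neural network prediction function h, the gradient of the quadratic loss satisfies the polynomial bound |∇_θ |h(z, θ) − l|²| ≤ C (1 + |y|)² (1 + |θ|^{n+1}) for all θ ∈ ℝ^d and y = (z, l), where the constant C > 0 depends only on D = max_{j=1,…,n} d_j, on the number of layers n, and on M_s. -/

import Mathlib

open scoped RealInnerProductSpace

/-- The index set of the parameter θ = (W₁, …, W_n) of an n-layer network with layer
dimensions dims 0, dims 1, …, dims n : the weight matrix Wᵢ₊₁ ∈ ℝ^{dims (i+1) × dims i}
is indexed by the fiber over i : Fin n. -/
abbrev NetIdx (n : ℕ) (dims : ℕ → ℕ) : Type :=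
  (i : Fin n) × (Fin (dims (i.1 + 1)) × Fin (dims i.1))

/-- The forward pass through the first k layers of the network:
a_0 = z, a_{k+1} = s_{k+1}(W_{k+1} a_k). -/
noncomputable def mlForward (n : ℕ) (dims : ℕ → ℕ) (sact : ℕ → ℝ → ℝ)
    (θ : EuclideanSpace ℝ (NetIdx n dims)) (z : EuclideanSpace ℝ (Fin (dims 0))) :
    (k : ℕ) → Fin (dims k) → ℝ
  | 0 => z
  | (k + 1) => fun j =>
      if hk : k < n then
        sact (k + 1) (∑ i : Fin (dims k), θ ⟨⟨k, hk⟩, (j, i)⟩ * mlForward n dims sact θ z k i)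
      else 0

/-- The n-layer network prediction h(z, θ) = s_n(W_n s_{n-1}(⋯ s_1(W_1 z))). -/
noncomputable def mlNet (n : ℕ) (dims : ℕ → ℕ) (sact : ℕ → ℝ → ℝ)
    (θ : EuclideanSpace ℝ (NetIdx n dims)) (z : EuclideanSpace ℝ (Fin (dims 0))) :
    EuclideanSpace ℝ (Fin (dims n)) :=
  WithLp.toLp 2 (fun j => mlForward n dims sact θ z n j)

/-- The squared loss |h(z,θ) − l|² of the n-layer network, as a function of θ, with
the data point y = (z, l) given in concatenated form. -/
noncomputable def mlLabel (n : ℕ) (dims : ℕ → ℕ)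
    (y : EuclideanSpace ℝ (Fin (dims 0) ⊕ Fin (dims n))) :
    EuclideanSpace ℝ (Fin (dims n)) :=
  WithLp.toLp 2 (fun j => y (Sum.inr j))

noncomputable def mlLoss (n : ℕ) (dims : ℕ → ℕ) (sact : ℕ → ℝ → ℝ)
    (y : EuclideanSpace ℝ (Fin (dims 0) ⊕ Fin (dims n)))
    (θ : EuclideanSpace ℝ (NetIdx n dims)) : ℝ :=
  ‖mlNet n dims sact θ (WithLp.toLp 2 (fun i => y (Sum.inl i))) - mlLabel n dims y‖ ^ 2


private lemma euclid_coord_abs_le {ι : Type*} [Fintype ι] (v : EuclideanSpace ℝ ι) (i : ι) :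
    |v i| ≤ ‖v‖ := by
  have h1 : ‖v i‖ ^ 2 ≤ ∑ j, ‖v j‖ ^ 2 :=
    Finset.single_le_sum (fun j _ => sq_nonneg ‖v j‖) (Finset.mem_univ i)
  calc |v i| = Real.sqrt (‖v i‖ ^ 2) := by
        rw [Real.sqrt_sq (norm_nonneg _)]; exact (Real.norm_eq_abs _).symm
    _ ≤ Real.sqrt (∑ j, ‖v j‖ ^ 2) := Real.sqrt_le_sqrt h1
    _ = ‖v‖ := (EuclideanSpace.norm_eq v).symm

private lemma euclid_norm_sub_sq {ι : Type*} [Fintype ι] (v w : EuclideanSpace ℝ ι) :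
    ‖v - w‖ ^ 2 = ∑ i, (v i - w i) ^ 2 := by
  rw [EuclideanSpace.norm_eq, Real.sq_sqrt (Finset.sum_nonneg fun _ _ => sq_nonneg _)]
  refine Finset.sum_congr rfl fun i _ => ?_
  simp [PiLp.sub_apply, Real.norm_eq_abs, sq_abs]

private lemma two_add_pow_le (n : ℕ) (t : ℝ) (ht : 0 ≤ t) :
    (2 + t) ^ n ≤ 2 * 4 ^ n * (1 + t ^ (n + 1)) := by
  have h4 : (0:ℝ) < 4 ^ n := by positivity
  rcases le_total t 1 with h | h
  · have h1 : (2 + t) ^ n ≤ 4 ^ n := pow_le_pow_left₀ (by linarith) (by linarith) n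
    nlinarith [pow_nonneg ht (n + 1)]
  · have h1 : (2 + t) ^ n ≤ (4 * t) ^ n := pow_le_pow_left₀ (by linarith) (by linarith) n
    have h2 : (4 * t : ℝ) ^ n = 4 ^ n * t ^ n := mul_pow 4 t n
    have h3 : t ^ n ≤ t ^ (n + 1) := pow_le_pow_right₀ h (Nat.le_succ n)
    nlinarith [pow_nonneg ht (n + 1), pow_nonneg ht n]

private lemma abs_comb_bound {Ms Y a b c : ℝ} (hMs : 0 ≤ Ms) (hY : 0 ≤ Y)
    (ha : |a| ≤ Ms + Y) (hb : |b| ≤ Ms + Y) (hc : |c| ≤ Y) :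
    |a + b - 2 * c| ≤ 4 * (Ms + 1) * (1 + Y) := by
  rw [abs_le] at ha hb hc ⊢
  constructor <;> [nlinarith [ha.1, hb.1, hc.2]; nlinarith [ha.2, hb.2, hc.1]]

private lemma step_bound {Ms Dm R Y a r t : ℝ} (hMs : 0 ≤ Ms) (hDm : 1 ≤ Dm) (hR : 1 ≤ R)
    (hY : 0 ≤ Y) (ha : 1 ≤ a) (hr : 1 ≤ r) (ht : 0 ≤ t) :
    Ms * (Dm * ((Ms + Y) * t + R * (a * (1 + Y) * r * t)))
      ≤ a * (Ms * Dm * (Ms + 1) + Ms * Dm + 1) * (1 + Y) * (r * (1 + R)) * t := by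
  have hDm0 : (0:ℝ) ≤ Dm := by linarith
  have ha0 : (0:ℝ) ≤ a := by linarith
  have hr0 : (0:ℝ) ≤ r := by linarith
  have hR0 : (0:ℝ) ≤ R := by linarith
  have h1Y : (0:ℝ) ≤ 1 + Y := by linarith
  have hs1 : Ms + Y ≤ (Ms + 1) * (1 + Y) := by nlinarith
  have h1a : Ms * Dm * (Ms + Y) * t ≤ Ms * Dm * ((Ms + 1) * (1 + Y)) * t :=
    mul_le_mul_of_nonneg_right
      (mul_le_mul_of_nonneg_left hs1 (mul_nonneg hMs hDm0)) ht
  have hrR : (1:ℝ) * 1 ≤ r * (1 + R) := mul_le_mul hr (by linarith) zero_le_one hr0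
  have hone' : (1:ℝ) * 1 ≤ a * (r * (1 + R)) := mul_le_mul ha (by linarith) zero_le_one ha0
  have hone : (1:ℝ) ≤ a * (r * (1 + R)) := by linarith
  have h1c : (0:ℝ) ≤ Ms * Dm * ((Ms + 1) * (1 + Y)) * t := by positivity
  have h1b : Ms * Dm * ((Ms + 1) * (1 + Y)) * t
      ≤ Ms * Dm * ((Ms + 1) * (1 + Y)) * t * (a * (r * (1 + R))) :=
    le_mul_of_one_le_right h1c hone
  have h2 : Ms * Dm * R * a * (1 + Y) * r * t ≤ Ms * Dm * (1 + R) * a * (1 + Y) * r * t := by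
    nlinarith [mul_nonneg (mul_nonneg (mul_nonneg (mul_nonneg (mul_nonneg hMs hDm0) ha0) h1Y) hr0) ht]
  have h3 : (0:ℝ) ≤ a * (1 + Y) * (r * (1 + R)) * t := by positivity
  nlinarith [h1a.trans h1b, h2, h3]

/-- Lemma 4, i.e. Proposition 4 of Lovas–Lytras–Rásonyi–Sabanis: for
the n-layer network with bounded C¹ activations (|s_i|, |s_i'| ≤ M_s),
|∇_θ |h(z,θ) − l|²| ≤ C (1 + |y|)² (1 + |θ|^{n+1}) for all θ, y = (z,l), where C > 0
depends only on D = max dims, n and M_s. -/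
theorem multilayer_gradient_polynomial_bound
    (n : ℕ) (hn : 1 < n) (dims : ℕ → ℕ) (hdims : ∀ i ≤ n, 0 < dims i)
    (sact : ℕ → ℝ → ℝ) (Ms : ℝ)
    (hsdiff : ∀ i, 1 ≤ i → i ≤ n → ContDiff ℝ 1 (sact i))
    (hsbd : ∀ i, 1 ≤ i → i ≤ n → ∀ x, |sact i x| ≤ Ms)
    (hs'bd : ∀ i, 1 ≤ i → i ≤ n → ∀ x, |deriv (sact i) x| ≤ Ms) :
    ∃ C > (0 : ℝ),
      ∀ (θ : EuclideanSpace ℝ (NetIdx n dims))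
        (y : EuclideanSpace ℝ (Fin (dims 0) ⊕ Fin (dims n))),
        ‖gradient (mlLoss n dims sact y) θ‖
          ≤ C * (1 + ‖y‖) ^ 2 * (1 + ‖θ‖ ^ (n + 1)) := by
  have hn1 : 1 ≤ n := hn.le
  have hMs : 0 ≤ Ms := (abs_nonneg _).trans (hsbd 1 le_rfl hn1 0)
  set Dm : ℝ := (∑ k ∈ Finset.range (n + 1), (dims k : ℝ)) + 1 with hDm_def
  have hsum0 : (0:ℝ) ≤ ∑ k ∈ Finset.range (n + 1), (dims k : ℝ) :=
    Finset.sum_nonneg fun _ _ => Nat.cast_nonneg _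
  have hDm1 : 1 ≤ Dm := by rw [hDm_def]; linarith
  have hDm0 : 0 ≤ Dm := by linarith
  have hdimsle : ∀ k, k ≤ n → (dims k : ℝ) ≤ Dm := by
    intro k hk
    have hmem : k ∈ Finset.range (n + 1) := Finset.mem_range.2 (Nat.lt_succ_of_le hk)
    have h := Finset.single_le_sum (f := fun k => (dims k : ℝ))
      (fun _ _ => Nat.cast_nonneg _) hmem
    rw [hDm_def]; linarith
  set A : ℝ := Ms * Dm * (Ms + 1) + Ms * Dm + 1 with hA_def
  have hA1 : 1 ≤ A := by
    rw [hA_def]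
    nlinarith [mul_nonneg hMs hDm0, mul_nonneg (mul_nonneg hMs hDm0) (by linarith : (0:ℝ) ≤ Ms + 1)]
  have hA0 : 0 ≤ A := by linarith
  have hAn1 : (1:ℝ) ≤ A ^ n := one_le_pow₀ hA1
  have hAn0 : (0:ℝ) ≤ A ^ n := by linarith
  have slip : ∀ i, 1 ≤ i → i ≤ n → ∀ a b : ℝ, |sact i a - sact i b| ≤ Ms * |a - b| := by
    intro i h1 h2 a b
    have h := Convex.norm_image_sub_le_of_norm_deriv_le (𝕜 := ℝ) (s := Set.univ)
      (f := sact i) (C := Ms)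
      (fun x _ => ((hsdiff i h1 h2).differentiable one_ne_zero).differentiableAt)
      (fun x _ => by simpa [Real.norm_eq_abs] using hs'bd i h1 h2 x)
      convex_univ (Set.mem_univ b) (Set.mem_univ a)
    simpa [Real.norm_eq_abs] using h
  refine ⟨8 * Dm * (Ms + 1) * A ^ n * 4 ^ n, ?_, ?_⟩
  · have h4 : (0:ℝ) < 4 ^ n := by positivity
    have h1 : (0:ℝ) < Dm := by linarith
    have h2 : (0:ℝ) < Ms + 1 := by linarith
    have h3 : (0:ℝ) < A ^ n := by linarith
    nlinarith [mul_pos (mul_pos (mul_pos h1 h2) h3) h4]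
  intro θ₀ y
  have hy0 : (0:ℝ) ≤ ‖y‖ := norm_nonneg y
  set z : EuclideanSpace ℝ (Fin (dims 0)) := WithLp.toLp 2 (fun i => y (Sum.inl i)) with hz_def
  set l : Fin (dims n) → ℝ := fun j => y (Sum.inr j) with hl_def
  have hzbd : ∀ j, |z j| ≤ ‖y‖ := fun j => euclid_coord_abs_le y (Sum.inl j)
  have hlbd : ∀ j, |l j| ≤ ‖y‖ := fun j => euclid_coord_abs_le y (Sum.inr j)
  set R : ℝ := ‖θ₀‖ + 1 with hR_def
  have hR1 : 1 ≤ R := by rw [hR_def]; linarith [norm_nonneg θ₀]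
  have hR0 : 0 ≤ R := by linarith
  have hRn1 : (1:ℝ) ≤ (1 + R) ^ n := one_le_pow₀ (by linarith)
  -- componentwise bound on the forward pass
  have Fbd : ∀ (θ : EuclideanSpace ℝ (NetIdx n dims)) k, k ≤ n → ∀ j,
      |mlForward n dims sact θ z k j| ≤ Ms + ‖y‖ := by
    intro θ k hk j
    match k with
    | 0 =>
      simp only [mlForward]
      exact (hzbd j).trans (by linarith)
    | (k + 1) =>
      have hklt : k < n := hk
      simp only [mlForward]
      rw [dif_pos hklt]
      exact (hsbd (k + 1) (Nat.succ_le_succ (Nat.zero_le _)) hk _).trans (by linarith)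
  -- differentiability of the forward pass in θ
  have Fdiff : ∀ k, k ≤ n → ∀ j,
      Differentiable ℝ (fun θ : EuclideanSpace ℝ (NetIdx n dims) =>
        mlForward n dims sact θ z k j) := by
    intro k
    induction k with
    | zero =>
      intro _ j
      simp only [mlForward]
      exact differentiable_const (z j)
    | succ k ih =>
      intro hk j
      have hklt : k < n := hk
      have heq : (fun θ : EuclideanSpace ℝ (NetIdx n dims) =>
            mlForward n dims sact θ z (k + 1) j)
          = fun θ => sact (k + 1)
              (∑ i : Fin (dims k), θ ⟨⟨k, hklt⟩, (j, i)⟩ * mlForward n dims sact θ z k i) := by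
        funext θ
        simp only [mlForward]
        rw [dif_pos hklt]
      rw [heq]
      refine ((hsdiff (k + 1) (Nat.succ_le_succ (Nat.zero_le _)) hk).differentiable
        one_ne_zero).comp ?_
      refine Differentiable.fun_sum fun i _ => ?_
      exact ((EuclideanSpace.proj
        (⟨⟨k, hklt⟩, (j, i)⟩ : NetIdx n dims)).differentiable).mul (ih (Nat.le_of_succ_le hk) i)
  -- Lipschitz bound on the forward pass, for parameters of norm ≤ R
  have key : ∀ k, k ≤ n → ∀ θ₁ θ₂ : EuclideanSpace ℝ (NetIdx n dims),
      ‖θ₁‖ ≤ R → ‖θ₂‖ ≤ R → ∀ j,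
      |mlForward n dims sact θ₁ z k j - mlForward n dims sact θ₂ z k j|
        ≤ A ^ k * (1 + ‖y‖) * (1 + R) ^ k * ‖θ₁ - θ₂‖ := by
    intro k
    induction k with
    | zero =>
      intro _ θ₁ θ₂ _ _ j
      simp only [mlForward, sub_self, abs_zero]
      exact mul_nonneg (mul_nonneg (mul_nonneg (pow_nonneg hA0 _) (by linarith))
        (pow_nonneg (by linarith) _)) (norm_nonneg _)
    | succ k ih =>
      intro hk θ₁ θ₂ hθ₁ hθ₂ j
      have hklt : k < n := hk
      have hkn : k ≤ n := Nat.le_of_succ_le hk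
      have e1 : mlForward n dims sact θ₁ z (k + 1) j
          = sact (k + 1) (∑ i : Fin (dims k),
              θ₁ ⟨⟨k, hklt⟩, (j, i)⟩ * mlForward n dims sact θ₁ z k i) := by
        simp only [mlForward]; rw [dif_pos hklt]
      have e2 : mlForward n dims sact θ₂ z (k + 1) j
          = sact (k + 1) (∑ i : Fin (dims k),
              θ₂ ⟨⟨k, hklt⟩, (j, i)⟩ * mlForward n dims sact θ₂ z k i) := by
        simp only [mlForward]; rw [dif_pos hklt]
      rw [e1, e2]
      have hterm : ∀ i : Fin (dims k),
          |θ₁ ⟨⟨k, hklt⟩, (j, i)⟩ * mlForward n dims sact θ₁ z k i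
            - θ₂ ⟨⟨k, hklt⟩, (j, i)⟩ * mlForward n dims sact θ₂ z k i|
          ≤ (Ms + ‖y‖) * ‖θ₁ - θ₂‖
            + R * (A ^ k * (1 + ‖y‖) * (1 + R) ^ k * ‖θ₁ - θ₂‖) := by
        intro i
        set e : NetIdx n dims := ⟨⟨k, hklt⟩, (j, i)⟩ with he_def
        have h1 : |θ₁ e - θ₂ e| ≤ ‖θ₁ - θ₂‖ := by
          have h := euclid_coord_abs_le (θ₁ - θ₂) e
          rwa [PiLp.sub_apply] at h
        have h2 : |mlForward n dims sact θ₁ z k i| ≤ Ms + ‖y‖ := Fbd θ₁ k hkn i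
        have h3 : |θ₂ e| ≤ R := (euclid_coord_abs_le θ₂ e).trans hθ₂
        have h4 := ih hkn θ₁ θ₂ hθ₁ hθ₂ i
        have expand : θ₁ e * mlForward n dims sact θ₁ z k i
              - θ₂ e * mlForward n dims sact θ₂ z k i
            = (θ₁ e - θ₂ e) * mlForward n dims sact θ₁ z k i
              + θ₂ e * (mlForward n dims sact θ₁ z k i - mlForward n dims sact θ₂ z k i) := by
          ring
        calc |θ₁ e * mlForward n dims sact θ₁ z k i
              - θ₂ e * mlForward n dims sact θ₂ z k i|
            ≤ |θ₁ e - θ₂ e| * |mlForward n dims sact θ₁ z k i|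
              + |θ₂ e| * |mlForward n dims sact θ₁ z k i - mlForward n dims sact θ₂ z k i| := by
              rw [expand]
              refine (abs_add_le _ _).trans ?_
              rw [abs_mul, abs_mul]
          _ ≤ ‖θ₁ - θ₂‖ * (Ms + ‖y‖)
              + R * (A ^ k * (1 + ‖y‖) * (1 + R) ^ k * ‖θ₁ - θ₂‖) := by
              exact add_le_add (mul_le_mul h1 h2 (abs_nonneg _) (norm_nonneg _))
                (mul_le_mul h3 h4 (abs_nonneg _) hR0)
          _ = (Ms + ‖y‖) * ‖θ₁ - θ₂‖
              + R * (A ^ k * (1 + ‖y‖) * (1 + R) ^ k * ‖θ₁ - θ₂‖) := by ring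
      have hu : |(∑ i : Fin (dims k), θ₁ ⟨⟨k, hklt⟩, (j, i)⟩ * mlForward n dims sact θ₁ z k i)
            - ∑ i : Fin (dims k), θ₂ ⟨⟨k, hklt⟩, (j, i)⟩ * mlForward n dims sact θ₂ z k i|
          ≤ (dims k : ℝ) * ((Ms + ‖y‖) * ‖θ₁ - θ₂‖
              + R * (A ^ k * (1 + ‖y‖) * (1 + R) ^ k * ‖θ₁ - θ₂‖)) := by
        rw [← Finset.sum_sub_distrib]
        refine (Finset.abs_sum_le_sum_abs _ _).trans ?_
        refine (Finset.sum_le_sum fun i _ => hterm i).trans ?_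
        rw [Finset.sum_const, Finset.card_univ, Fintype.card_fin, nsmul_eq_mul]
      calc |sact (k + 1) (∑ i : Fin (dims k),
              θ₁ ⟨⟨k, hklt⟩, (j, i)⟩ * mlForward n dims sact θ₁ z k i)
            - sact (k + 1) (∑ i : Fin (dims k),
              θ₂ ⟨⟨k, hklt⟩, (j, i)⟩ * mlForward n dims sact θ₂ z k i)|
          ≤ Ms * |(∑ i : Fin (dims k), θ₁ ⟨⟨k, hklt⟩, (j, i)⟩ * mlForward n dims sact θ₁ z k i)
            - ∑ i : Fin (dims k), θ₂ ⟨⟨k, hklt⟩, (j, i)⟩ * mlForward n dims sact θ₂ z k i| :=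
            slip (k + 1) (Nat.succ_le_succ (Nat.zero_le _)) hk _ _
        _ ≤ Ms * ((dims k : ℝ) * ((Ms + ‖y‖) * ‖θ₁ - θ₂‖
              + R * (A ^ k * (1 + ‖y‖) * (1 + R) ^ k * ‖θ₁ - θ₂‖))) :=
            mul_le_mul_of_nonneg_left hu hMs
        _ ≤ Ms * (Dm * ((Ms + ‖y‖) * ‖θ₁ - θ₂‖
              + R * (A ^ k * (1 + ‖y‖) * (1 + R) ^ k * ‖θ₁ - θ₂‖))) := by
            have hQ : (0:ℝ) ≤ A ^ k * (1 + ‖y‖) * (1 + R) ^ k * ‖θ₁ - θ₂‖ :=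
              mul_nonneg (mul_nonneg (mul_nonneg (pow_nonneg hA0 _) (by linarith))
                (pow_nonneg (by linarith) _)) (norm_nonneg _)
            have hT : (0:ℝ) ≤ (Ms + ‖y‖) * ‖θ₁ - θ₂‖
                + R * (A ^ k * (1 + ‖y‖) * (1 + R) ^ k * ‖θ₁ - θ₂‖) :=
              add_nonneg (mul_nonneg (by linarith) (norm_nonneg _)) (mul_nonneg hR0 hQ)
            exact mul_le_mul_of_nonneg_left
              (mul_le_mul_of_nonneg_right (hdimsle k hkn) hT) hMs
        _ ≤ A ^ k * (Ms * Dm * (Ms + 1) + Ms * Dm + 1) * (1 + ‖y‖)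
              * ((1 + R) ^ k * (1 + R)) * ‖θ₁ - θ₂‖ :=
            step_bound hMs hDm1 hR1 hy0 (one_le_pow₀ hA1) (one_le_pow₀ (by linarith)) (norm_nonneg _)
        _ = A ^ (k + 1) * (1 + ‖y‖) * (1 + R) ^ (k + 1) * ‖θ₁ - θ₂‖ := by
            rw [← hA_def, pow_succ, pow_succ]
  -- loss as a finite sum
  have loss_eq : ∀ θ : EuclideanSpace ℝ (NetIdx n dims),
      mlLoss n dims sact y θ = ∑ j, (mlForward n dims sact θ z n j - l j) ^ 2 := by
    intro θ
    show ‖mlNet n dims sact θ (WithLp.toLp 2 (fun i => y (Sum.inl i))) - mlLabel n dims y‖ ^ 2 = _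
    rw [euclid_norm_sub_sq]
    refine Finset.sum_congr rfl fun j _ => ?_
    rfl
  -- differentiability of the loss
  have hlossdiff : DifferentiableAt ℝ (mlLoss n dims sact y) θ₀ := by
    have heq : mlLoss n dims sact y
        = fun θ => ∑ j, (mlForward n dims sact θ z n j - l j) ^ 2 := funext loss_eq
    rw [heq]
    exact (Differentiable.fun_sum fun j _ =>
      ((Fdiff n le_rfl j).sub_const (l j)).pow 2).differentiableAt
  -- Lipschitz estimate near θ₀
  set K : ℝ := 4 * Dm * (Ms + 1) * A ^ n * (1 + ‖y‖) ^ 2 * (1 + R) ^ n with hK_def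
  have hQt0 : ∀ t : ℝ, 0 ≤ t → (0:ℝ) ≤ A ^ n * (1 + ‖y‖) * (1 + R) ^ n * t := fun t ht =>
    mul_nonneg (mul_nonneg (mul_nonneg hAn0 (by linarith)) (by linarith)) ht
  have hK0 : 0 ≤ K := by
    rw [hK_def]
    exact mul_nonneg (mul_nonneg (mul_nonneg (mul_nonneg (mul_nonneg (by norm_num) hDm0)
      (add_nonneg hMs zero_le_one)) hAn0) (sq_nonneg _))
      (pow_nonneg (add_nonneg zero_le_one hR0) n)
  have hlip : ∀ θ : EuclideanSpace ℝ (NetIdx n dims), ‖θ - θ₀‖ < 1 →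
      ‖mlLoss n dims sact y θ - mlLoss n dims sact y θ₀‖ ≤ K * ‖θ - θ₀‖ := by
    intro θ hθ
    have hθn : ‖θ‖ ≤ R := by
      have h := norm_sub_norm_le θ θ₀
      rw [hR_def]; linarith
    have hθ₀n : ‖θ₀‖ ≤ R := by rw [hR_def]; linarith
    rw [loss_eq, loss_eq, Real.norm_eq_abs, ← Finset.sum_sub_distrib]
    refine (Finset.abs_sum_le_sum_abs _ _).trans ?_
    have hterm : ∀ j, |(mlForward n dims sact θ z n j - l j) ^ 2
          - (mlForward n dims sact θ₀ z n j - l j) ^ 2|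
        ≤ (A ^ n * (1 + ‖y‖) * (1 + R) ^ n * ‖θ - θ₀‖) * (4 * (Ms + 1) * (1 + ‖y‖)) := by
      intro j
      have hab : (mlForward n dims sact θ z n j - l j) ^ 2
            - (mlForward n dims sact θ₀ z n j - l j) ^ 2
          = (mlForward n dims sact θ z n j - mlForward n dims sact θ₀ z n j)
            * (mlForward n dims sact θ z n j + mlForward n dims sact θ₀ z n j - 2 * l j) := by
        ring
      rw [hab, abs_mul]
      have h1 := key n le_rfl θ θ₀ hθn hθ₀n j
      have h2 := abs_comb_bound hMs hy0 (Fbd θ n le_rfl j) (Fbd θ₀ n le_rfl j) (hlbd j)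
      exact mul_le_mul h1 h2 (abs_nonneg _) (hQt0 _ (norm_nonneg _))
    refine (Finset.sum_le_sum fun j _ => hterm j).trans ?_
    rw [Finset.sum_const, Finset.card_univ, Fintype.card_fin, nsmul_eq_mul]
    have hb0 : (0:ℝ) ≤ (A ^ n * (1 + ‖y‖) * (1 + R) ^ n * ‖θ - θ₀‖) * (4 * (Ms + 1) * (1 + ‖y‖)) :=
      mul_nonneg (hQt0 _ (norm_nonneg _))
        (mul_nonneg (mul_nonneg (by norm_num) (add_nonneg hMs zero_le_one))
          (add_nonneg zero_le_one hy0))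
    calc (dims n : ℝ) * ((A ^ n * (1 + ‖y‖) * (1 + R) ^ n * ‖θ - θ₀‖) * (4 * (Ms + 1) * (1 + ‖y‖)))
        ≤ Dm * ((A ^ n * (1 + ‖y‖) * (1 + R) ^ n * ‖θ - θ₀‖) * (4 * (Ms + 1) * (1 + ‖y‖))) :=
          mul_le_mul_of_nonneg_right (hdimsle n le_rfl) hb0
      _ = K * ‖θ - θ₀‖ := by rw [hK_def]; ring
  have hfd : ‖fderiv ℝ (mlLoss n dims sact y) θ₀‖ ≤ K := by
    refine hlossdiff.hasFDerivAt.le_of_lip' hK0 ?_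
    filter_upwards [Metric.ball_mem_nhds θ₀ one_pos] with θ hθ
    exact hlip θ (by rwa [Metric.mem_ball, dist_eq_norm] at hθ)
  have hgrad : ‖gradient (mlLoss n dims sact y) θ₀‖
      = ‖fderiv ℝ (mlLoss n dims sact y) θ₀‖ := by
    unfold gradient
    exact LinearIsometryEquiv.norm_map _ _
  rw [hgrad]
  refine hfd.trans ?_
  have hp := two_add_pow_le n ‖θ₀‖ (norm_nonneg θ₀)
  have h1R : (1:ℝ) + R = 2 + ‖θ₀‖ := by rw [hR_def]; ring
  have hc0 : (0:ℝ) ≤ 4 * Dm * (Ms + 1) * A ^ n * (1 + ‖y‖) ^ 2 :=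
    mul_nonneg (mul_nonneg (mul_nonneg (mul_nonneg (by norm_num) hDm0)
      (add_nonneg hMs zero_le_one)) hAn0) (sq_nonneg _)
  calc K = (4 * Dm * (Ms + 1) * A ^ n * (1 + ‖y‖) ^ 2) * (2 + ‖θ₀‖) ^ n := by
        rw [hK_def, h1R]
    _ ≤ (4 * Dm * (Ms + 1) * A ^ n * (1 + ‖y‖) ^ 2) * (2 * 4 ^ n * (1 + ‖θ₀‖ ^ (n + 1))) :=
        mul_le_mul_of_nonneg_left hp hc0
    _ = 8 * Dm * (Ms + 1) * A ^ n * 4 ^ n * (1 + ‖y‖) ^ 2 * (1 + ‖θ₀‖ ^ (n + 1)) := by ring
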